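/- Let A be an M×M complex Hermitian positive semidefinite matrix, b ∈ ℂ^M, and let 0 < μ₁ ≤ μ₂ be real numbers. Then ‖(A + μ₂·I)⁻¹ b‖ ≤ ‖(A + μ₁·I)⁻¹ b‖, where ‖·‖ is the Euclidean norm on ℂ^M. -/

import Mathlib

open Matrix
open scoped ComplexOrder

lemma euclid_norm_eq_sqrt {M : ℕ} (x : Fin M → ℂ) :
    ‖((WithLp.equiv 2 (Fin M → ℂ)).symm x : EuclideanSpace ℂ (Fin M))‖
      = Real.sqrt (∑ i, ‖x i‖ ^ 2) := by
  rw [EuclideanSpace.norm_eq]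
  rfl

lemma norm_mulVec_unitary {M : ℕ} (U : Matrix (Fin M) (Fin M) ℂ)
    (hU : U ∈ Matrix.unitaryGroup (Fin M) ℂ) (y : Fin M → ℂ) :
    (∑ i, ‖(U *ᵥ y) i‖ ^ 2) = ∑ i, ‖y i‖ ^ 2 := by
  have key : star (U *ᵥ y) ⬝ᵥ (U *ᵥ y) = star y ⬝ᵥ y := by
    rw [star_mulVec, dotProduct_mulVec, vecMul_vecMul]
    rw [show Uᴴ * U = 1 from hU.1]
    rw [vecMul_one]
  have h1 : ∀ z : Fin M → ℂ, star z ⬝ᵥ z = ((∑ i, ‖z i‖ ^ 2 : ℝ) : ℂ) := by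
    intro z
    simp only [dotProduct, Pi.star_apply, RCLike.star_def, Complex.ofReal_sum]
    refine Finset.sum_congr rfl fun i _ => ?_
    rw [mul_comm, Complex.mul_conj]
    norm_cast
    rw [Complex.normSq_eq_norm_sq]
  have := key
  rw [h1, h1] at this
  exact_mod_cast this

lemma inv_shift {M : ℕ} (A : Matrix (Fin M) (Fin M) ℂ)
    (hA : A.IsHermitian) (μ : ℝ) (hμpos : ∀ i, (0 : ℝ) < hA.eigenvalues i + μ) :
    (A + (μ : ℂ) • (1 : Matrix (Fin M) (Fin M) ℂ))⁻¹ =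
      (hA.eigenvectorUnitary : Matrix (Fin M) (Fin M) ℂ) *
        diagonal (fun i => ((hA.eigenvalues i + μ : ℝ) : ℂ)⁻¹) *
        (star (hA.eigenvectorUnitary : Matrix (Fin M) (Fin M) ℂ)) := by
  set U := (hA.eigenvectorUnitary : Matrix (Fin M) (Fin M) ℂ)
  have hUU : U * star U = 1 := hA.eigenvectorUnitary.2.2
  have hUsU : star U * U = 1 := hA.eigenvectorUnitary.2.1
  have hsum : A + (μ : ℂ) • (1 : Matrix (Fin M) (Fin M) ℂ) =
      U * diagonal (fun i => ((hA.eigenvalues i + μ : ℝ) : ℂ)) * star U := by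
    conv_lhs => rw [hA.spectral_theorem, Unitary.conjStarAlgAut_apply]
    have h1 : (μ : ℂ) • (1 : Matrix (Fin M) (Fin M) ℂ) =
        U * ((μ : ℂ) • (1 : Matrix (Fin M) (Fin M) ℂ)) * star U := by
      rw [Matrix.mul_smul, Matrix.mul_one, Matrix.smul_mul, hUU]
    rw [h1, ← Matrix.add_mul, ← Matrix.mul_add]
    congr 2
    ext i j
    rcases eq_or_ne i j with rfl | h
    · simp only [Matrix.add_apply, Matrix.diagonal_apply_eq, Matrix.smul_apply,
        Matrix.one_apply_eq, Function.comp_apply, smul_eq_mul, mul_one]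
      push_cast
      rfl
    · simp [Matrix.diagonal_apply_ne _ h, Matrix.one_apply_ne h]
  rw [hsum]
  apply Matrix.inv_eq_right_inv
  have hDD : diagonal (fun i => ((hA.eigenvalues i + μ : ℝ) : ℂ)) *
      diagonal (fun i => ((hA.eigenvalues i + μ : ℝ) : ℂ)⁻¹) = 1 := by
    rw [Matrix.diagonal_mul_diagonal]
    have : (fun i => ((hA.eigenvalues i + μ : ℝ) : ℂ) * ((hA.eigenvalues i + μ : ℝ) : ℂ)⁻¹)
        = fun _ => (1 : ℂ) := by
      funext i
      rw [mul_inv_cancel₀]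
      exact_mod_cast (hμpos i).ne'
    rw [this, Matrix.diagonal_one]
  simp only [Matrix.mul_assoc]
  rw [← Matrix.mul_assoc (star U) U, hUsU, Matrix.one_mul,
    ← Matrix.mul_assoc (diagonal fun i => ((hA.eigenvalues i + μ : ℝ) : ℂ)), hDD,
    Matrix.one_mul, hUU]

/-- Monotonicity of the beamformer norm in the dual variable: for Hermitian PSD `A`,
`0 < μ₁ ≤ μ₂` implies `‖(A + μ₂I)⁻¹ b‖ ≤ ‖(A + μ₁I)⁻¹ b‖` in the Euclidean norm. -/
theorem beamformer_norm_antitone {M : ℕ} (A : Matrix (Fin M) (Fin M) ℂ)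
    (hA : A.IsHermitian) (hApsd : A.PosSemidef) (b : Fin M → ℂ)
    (μ₁ μ₂ : ℝ) (hμ₁ : 0 < μ₁) (hμ : μ₁ ≤ μ₂) :
    ‖((WithLp.equiv 2 (Fin M → ℂ)).symm
        ((A + (μ₂ : ℂ) • (1 : Matrix (Fin M) (Fin M) ℂ))⁻¹ *ᵥ b) :
      EuclideanSpace ℂ (Fin M))‖ ≤
    ‖((WithLp.equiv 2 (Fin M → ℂ)).symm
        ((A + (μ₁ : ℂ) • (1 : Matrix (Fin M) (Fin M) ℂ))⁻¹ *ᵥ b) :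
      EuclideanSpace ℂ (Fin M))‖ := by
  set U := (hA.eigenvectorUnitary : Matrix (Fin M) (Fin M) ℂ) with hUdef
  have hev : ∀ i, 0 ≤ hA.eigenvalues i := hApsd.eigenvalues_nonneg
  have hpos1 : ∀ i, (0 : ℝ) < hA.eigenvalues i + μ₁ := fun i => by
    have := hev i; linarith
  have hpos2 : ∀ i, (0 : ℝ) < hA.eigenvalues i + μ₂ := fun i => by
    have := hev i; linarith
  rw [inv_shift A hA μ₁ hpos1, inv_shift A hA μ₂ hpos2]
  set c := star U *ᵥ b with hc
  have hmv : ∀ (d : Fin M → ℂ),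
      (U * diagonal d * star U) *ᵥ b = U *ᵥ (diagonal d *ᵥ c) := by
    intro d
    rw [← Matrix.mulVec_mulVec, ← Matrix.mulVec_mulVec]
  rw [hmv, hmv, euclid_norm_eq_sqrt, euclid_norm_eq_sqrt,
    norm_mulVec_unitary U hA.eigenvectorUnitary.2 _,
    norm_mulVec_unitary U hA.eigenvectorUnitary.2 _]
  apply Real.sqrt_le_sqrt
  apply Finset.sum_le_sum
  intro i _
  rw [Matrix.mulVec_diagonal, Matrix.mulVec_diagonal, norm_mul, norm_mul]
  gcongr (?_ * ‖c i‖) ^ 2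
  rw [norm_inv, norm_inv, Complex.norm_real, Complex.norm_real,
    Real.norm_of_nonneg (hpos1 i).le, Real.norm_of_nonneg (hpos2 i).le]
  exact inv_anti₀ (hpos1 i) (by linarith)
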